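/- Let z = x + i·y be a complex number with x > 0 and y ≠ 0. Then N^{x−1} · | (N+1)^{-z}/(1−z) · (1 − x − y/tan(y·ln((N+2)/(N+1)))) | converges, as N → ∞, to 1/|1−z|. Equivalently, the distance |ζ_N(z) − c_N(z)| between the N-th partial sum of the Riemann series and the N-th term of the radial-convergence sequence is asymptotic to 1/(|1−z|·N^{x−1}). -/

import Mathlib

open Filter

/-- The `N`-th partial sum of the Riemann series: `ζ_N(z) = ∑_{n=1}^{N} n^{-z}`. -/
noncomputable def zetaPartial (z : ℂ) (N : ℕ) : ℂ :=
  ∑ n ∈ Finset.Icc 1 N, (n : ℂ) ^ (-z)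

/-- The correction term
`r_N(z) = (N+1)^{-z}/(1−z) · (1 − x − y/tan(y·ln((N+2)/(N+1))))` where `x = Re z`, `y = Im z`. -/
noncomputable def radialCorrection (z : ℂ) (N : ℕ) : ℂ :=
  ((N : ℂ) + 1) ^ (-z) / (1 - z) *
    ((1 - z.re - z.im / Real.tan (z.im * Real.log (((N : ℝ) + 2) / ((N : ℝ) + 1))) : ℝ) : ℂ)

/-- The radial-convergence sequence `c_N(z) = ζ_N(z) + r_N(z)`. -/
noncomputable def radialSeq (z : ℂ) (N : ℕ) : ℂ :=
  zetaPartial z N + radialCorrection z N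

lemma aux_tan_div : Tendsto (fun u : ℝ => u / Real.tan u) (nhdsWithin 0 {0}ᶜ) (nhds 1) := by
  have hd : HasDerivAt Real.tan 1 0 := by
    simpa using Real.hasDerivAt_tan (by norm_num : Real.cos 0 ≠ 0)
  have h1 : Tendsto (fun u : ℝ => u⁻¹ * Real.tan u) (nhdsWithin 0 {0}ᶜ) (nhds 1) := by
    have := hasDerivAt_iff_tendsto_slope.mp hd
    simpa [slope_fun_def, Real.tan_zero] using this
  have := h1.inv₀ one_ne_zero
  simpa [mul_inv_rev, inv_inv, div_eq_mul_inv, mul_comm] using this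

/-- For `z = x + i·y` with `x > 0`, `y ≠ 0`, the rescaled modulus of the correction term,
`N^{x−1}·|r_N(z)| = N^{x−1}·|c_N(z) − ζ_N(z)|`, converges to `1/|1−z|`: the distance
between the partial sum and the radial-convergence sequence is asymptotic to
`1/(|1−z|·N^{x−1})`. -/
theorem radialCorrection_abs_asymptotic (z : ℂ) (hx : 0 < z.re) (hy : z.im ≠ 0) :
    Tendsto (fun N : ℕ => (N : ℝ) ^ (z.re - 1) * ‖radialCorrection z N‖)
      atTop (nhds (1 / ‖1 - z‖)) := by
  set x := z.re with hxdef
  set y := z.im with hydef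
  set t : ℕ → ℝ := fun N => Real.log (((N : ℝ) + 2) / ((N : ℝ) + 1)) with htdef
  set B : ℕ → ℝ := fun N => 1 - x - y / Real.tan (y * t N) with hBdef
  have hNpos : ∀ N : ℕ, (0 : ℝ) < (N : ℝ) + 1 := fun N => by positivity
  have hNne : ∀ N : ℕ, ((N : ℝ) + 1) ≠ 0 := fun N => (hNpos N).ne'
  have htpos : ∀ N : ℕ, 0 < t N := by
    intro N
    apply Real.log_pos
    rw [lt_div_iff₀ (hNpos N)]
    linarith
  have hz1 : (1 : ℂ) - z ≠ 0 := by
    intro h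
    apply hy
    have : z = 1 := by linear_combination -h
    rw [hydef, this]; simp
  have habs1z : ‖1 - z‖ ≠ 0 := norm_ne_zero_iff.mpr hz1
  -- Q N = (N+1) * t N → 1
  have hQ : Tendsto (fun N : ℕ => ((N : ℝ) + 1) * t N) atTop (nhds 1) := by
    have h0 := Real.tendsto_mul_log_one_add_div_atTop 1
    have hcomp : Tendsto (fun N : ℕ => (N : ℝ) + 1) atTop atTop :=
      tendsto_atTop_add_const_right _ 1 tendsto_natCast_atTop_atTop
    have := h0.comp hcomp
    apply this.congr
    intro N
    simp only [Function.comp]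
    congr 1
    rw [htdef]
    congr 1
    field_simp
    ring
  have hone : Tendsto (fun N : ℕ => 1 / ((N : ℝ) + 1)) atTop (nhds 0) :=
    tendsto_one_div_add_atTop_nhds_zero_nat
  -- t → 0
  have ht0 : Tendsto t atTop (nhds 0) := by
    have := hQ.mul hone
    rw [one_mul] at this
    apply this.congr
    intro N
    field_simp
  -- y * t N → 0 within ≠ 0
  have hyt : Tendsto (fun N : ℕ => y * t N) atTop (nhdsWithin 0 {0}ᶜ) := by
    apply tendsto_nhdsWithin_of_tendsto_nhds_of_eventually_within
    · simpa using ht0.const_mul y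
    · exact Eventually.of_forall fun N => mul_ne_zero hy (htpos N).ne'
  -- P N = t N * (y / tan (y t N)) → 1
  have hP : Tendsto (fun N : ℕ => t N * (y / Real.tan (y * t N))) atTop (nhds 1) := by
    have := aux_tan_div.comp hyt
    apply this.congr
    intro N
    simp only [Function.comp]
    rw [mul_div_assoc', mul_comm y (t N), mul_div_assoc]
  -- second term : (y / tan(y t N)) / (N+1) → 1
  have hsecond : Tendsto (fun N : ℕ => (y / Real.tan (y * t N)) / ((N : ℝ) + 1))
      atTop (nhds 1) := by
    have := hP.div hQ one_ne_zero
    rw [div_one] at this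
    apply this.congr
    intro N
    simp only [Pi.div_apply]
    rw [mul_comm ((N : ℝ) + 1) (t N), mul_div_mul_left _ _ (htpos N).ne']
  -- B N / (N+1) → -1
  have hBdiv : Tendsto (fun N : ℕ => B N / ((N : ℝ) + 1)) atTop (nhds (-1)) := by
    have hfirst : Tendsto (fun N : ℕ => (1 - x) / ((N : ℝ) + 1)) atTop (nhds 0) := by
      have := hone.const_mul (1 - x)
      rw [mul_zero] at this
      apply this.congr
      intro N; rw [mul_one_div]
    have := hfirst.sub hsecond
    rw [zero_sub] at this
    apply this.congr
    intro N
    simp only [hBdef]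
    ring
  -- |B N| / (N+1) → 1
  have habsB : Tendsto (fun N : ℕ => |B N| / ((N : ℝ) + 1)) atTop (nhds 1) := by
    have := hBdiv.abs
    rw [abs_neg, abs_one] at this
    apply this.congr
    intro N
    rw [abs_div, abs_of_pos (hNpos N)]
  -- L1 : N^(x-1) * (N+1)^(1-x) → 1
  have hL1 : Tendsto (fun N : ℕ => (N : ℝ) ^ (x - 1) * ((N : ℝ) + 1) ^ (1 - x))
      atTop (nhds 1) := by
    have hq : Tendsto (fun N : ℕ => (N : ℝ) / ((N : ℝ) + 1)) atTop (nhds 1) := by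
      have : Tendsto (fun N : ℕ => 1 - 1 / ((N : ℝ) + 1)) atTop (nhds (1 - 0)) :=
        tendsto_const_nhds.sub hone
      rw [sub_zero] at this
      apply this.congr
      intro N
      field_simp
      ring
    have := hq.rpow_const (Or.inl one_ne_zero) (p := x - 1)
    rw [Real.one_rpow] at this
    apply this.congr
    intro N
    rw [Real.div_rpow (Nat.cast_nonneg N) (hNpos N).le, div_eq_mul_inv,
      ← Real.rpow_neg (hNpos N).le, neg_sub]
  -- combine
  have hfull : Tendsto (fun N : ℕ =>
      ((N : ℝ) ^ (x - 1) * ((N : ℝ) + 1) ^ (1 - x)) * (|B N| / ((N : ℝ) + 1)) *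
        (‖1 - z‖)⁻¹) atTop (nhds (1 / ‖1 - z‖)) := by
    have := (hL1.mul habsB).mul_const (‖1 - z‖)⁻¹
    simpa [one_div] using this
  apply hfull.congr
  intro N
  -- compute |radialCorrection z N|
  have hcast : ((N : ℂ) + 1) = (((N : ℝ) + 1 : ℝ) : ℂ) := by push_cast; ring
  have habscpow : ‖((N : ℂ) + 1) ^ (-z)‖ = ((N : ℝ) + 1) ^ (-x) := by
    rw [hcast, Complex.norm_cpow_eq_rpow_re_of_pos (hNpos N)]
    simp [hxdef]
  have habsr : ‖radialCorrection z N‖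
      = ((N : ℝ) + 1) ^ (-x) / ‖1 - z‖ * |B N| := by
    rw [radialCorrection]
    rw [norm_mul, norm_div, habscpow, Complex.norm_real, Real.norm_eq_abs]
  rw [habsr]
  have hsplit : ((N : ℝ) + 1) ^ (1 - x) = ((N : ℝ) + 1) * ((N : ℝ) + 1) ^ (-x) := by
    rw [show (1 - x) = 1 + (-x) by ring, Real.rpow_add (hNpos N), Real.rpow_one]
  rw [hsplit]
  field_simp
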